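/- The augmentation ideal M of BT, equipped with concatenation m, left graft ≻ and right graft ≺, satisfies for all x, y, z ∈ M: (xy)≻z = x≻(y≻z), (x≻y)z = x≻(yz), (x≺y)≺z = x≺(yz), (xy)≺z = x(y≺z), and (x≻y)≺z = x≻(y≺z); hence (M, m, ≻, ≺) is a bigraft algebra. -/

import Mathlib

/-- A planar rooted tree with `{l,r}`-decorated edges (admissible: no `r`-edge left of an
`l`-edge at a vertex): a tree is `B(F ⊗ G)` with `F` the `l`-children and `G` the
`r`-children. -/
inductive DTree : Type
  | node : List DTree → List DTree → DTree

/-- A nonempty planar decorated forest. -/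
def DForest : Type := { l : List DTree // l ≠ [] }

/-- Left graft on lists: graft `g` on the root of the first tree, on the left. -/
def succL (g : List DTree) : List DTree → List DTree
  | [] => []
  | (DTree.node l r) :: rest => DTree.node (g ++ l) r :: rest

/-- Right graft on lists: graft `f` on the root of the last tree of the first argument,
on the right. -/
def precL : List DTree → List DTree → List DTree
  | [], _ => []
  | [DTree.node l r], f => [DTree.node l (r ++ f)]
  | t :: t' :: ts, f => t :: precL (t' :: ts) f

theorem succL_ne (g : List DTree) : ∀ f : List DTree, f ≠ [] → succL g f ≠ [] := by
  intro f hf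
  match f with
  | [] => exact absurd rfl hf
  | (DTree.node l r) :: rest => simp [succL]

theorem precL_ne : ∀ (g f : List DTree), g ≠ [] → precL g f ≠ [] := by
  intro g f hg
  match g with
  | [] => exact absurd rfl hg
  | [DTree.node l r] => simp [precL]
  | t :: t' :: ts => simp [precL]

/-- Concatenation of forests. -/
def catF (x y : DForest) : DForest :=
  ⟨x.1 ++ y.1, fun h => x.2 (List.append_eq_nil_iff.mp h).1⟩

/-- Left graft `x ≻ y` of forests. -/
def succF (x y : DForest) : DForest := ⟨succL x.1 y.1, succL_ne x.1 y.1 y.2⟩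

/-- Right graft `x ≺ y` of forests. -/
def precF (x y : DForest) : DForest := ⟨precL x.1 y.1, precL_ne x.1 y.1 x.2⟩

/-- Bilinear extension to the free vector space `M = K[DForest]` (the augmentation
ideal of `BT`) of a binary operation on forests. -/
noncomputable def lift2 (K : Type*) [Field K] (f : DForest → DForest → DForest) :
    (DForest →₀ K) →ₗ[K] (DForest →₀ K) →ₗ[K] (DForest →₀ K) :=
  Finsupp.lift ((DForest →₀ K) →ₗ[K] (DForest →₀ K)) K DForest
    (fun a => Finsupp.lift (DForest →₀ K) K DForest
      (fun b => Finsupp.single (f a b) (1 : K)))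

-- Pointwise list-level lemmas

theorem succL_append (x y z : List DTree) :
    succL (x ++ y) z = succL x (succL y z) := by
  match z with
  | [] => simp [succL]
  | (DTree.node l r) :: rest => simp [succL, List.append_assoc]

theorem succL_cat (x y z : List DTree) (hy : y ≠ []) :
    succL x y ++ z = succL x (y ++ z) := by
  match y with
  | [] => exact absurd rfl hy
  | (DTree.node l r) :: rest => simp [succL]

theorem precL_precL (x y z : List DTree) :
    precL (precL x y) z = precL x (y ++ z) := by
  match x with
  | [] => simp [precL]
  | [DTree.node l r] => simp [precL, List.append_assoc]
  | t :: t' :: ts =>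
    have ih := precL_precL (t' :: ts) y z
    have hne : precL (t' :: ts) y ≠ [] := precL_ne _ _ (by simp)
    match h : precL (t' :: ts) y with
    | [] => exact absurd h hne
    | u :: us =>
      simp only [precL]
      rw [h]
      simp only [precL]
      rw [← h, ih]

theorem precL_cat (x y z : List DTree) (hy : y ≠ []) :
    precL (x ++ y) z = x ++ precL y z := by
  match x with
  | [] => simp
  | a :: xs =>
    have ih := precL_cat xs y z hy
    have : xs ++ y ≠ [] := fun h => hy (List.append_eq_nil_iff.mp h).2
    match h : xs ++ y with
    | [] => exact absurd h this
    | u :: us =>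
      simp only [List.cons_append]
      rw [h]
      simp only [precL]
      rw [← h, ih]

theorem precL_succL (x y z : List DTree) (hy : y ≠ []) :
    precL (succL x y) z = succL x (precL y z) := by
  match y with
  | [] => exact absurd rfl hy
  | [DTree.node l r] => simp [succL, precL]
  | (DTree.node l r) :: t' :: ts => simp [succL, precL]

-- Forest-level lemmas

theorem catF_assoc (a b c : DForest) : catF (catF a b) c = catF a (catF b c) := by
  apply Subtype.ext
  simp [catF, List.append_assoc]

theorem succF_cat (a b c : DForest) : succF (catF a b) c = succF a (succF b c) := by
  apply Subtype.ext
  simp [succF, catF, succL_append]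

theorem cat_succF (a b c : DForest) : catF (succF a b) c = succF a (catF b c) := by
  apply Subtype.ext
  simp [succF, catF, succL_cat a.1 b.1 c.1 b.2]

theorem precF_precF (a b c : DForest) : precF (precF a b) c = precF a (catF b c) := by
  apply Subtype.ext
  simp [precF, catF, precL_precL]

theorem precF_cat (a b c : DForest) : precF (catF a b) c = catF a (precF b c) := by
  apply Subtype.ext
  simp [precF, catF, precL_cat a.1 b.1 c.1 b.2]

theorem precF_succF (a b c : DForest) : precF (succF a b) c = succF a (precF b c) := by
  apply Subtype.ext
  simp [succF, precF, precL_succL a.1 b.1 c.1 b.2]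

theorem lift2_single (K : Type*) [Field K] (f : DForest → DForest → DForest)
    (a b : DForest) :
    lift2 K f (Finsupp.single a 1) (Finsupp.single b 1) = Finsupp.single (f a b) 1 := by
  simp [lift2]

theorem lift2_ext (K : Type*) [Field K] (f g h k : DForest → DForest → DForest)
    (H : ∀ a b c, f (g a b) c = h a (k b c)) :
    ∀ x y z : DForest →₀ K,
      lift2 K f (lift2 K g x y) z = lift2 K h x (lift2 K k y z) := by
  intro x y z
  induction x using Finsupp.induction_linear with
  | zero => simp
  | add p q hp hq => simp [map_add, hp, hq]
  | single a r =>
    induction y using Finsupp.induction_linear with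
    | zero => simp
    | add p q hp hq => simp [map_add, hp, hq]
    | single b s =>
      induction z using Finsupp.induction_linear with
      | zero => simp
      | add p q hp hq => simp [map_add, hp, hq]
      | single c t =>
        have e1 : (Finsupp.single a r : DForest →₀ K) = r • Finsupp.single a 1 := by
          simp [Finsupp.smul_single]
        have e2 : (Finsupp.single b s : DForest →₀ K) = s • Finsupp.single b 1 := by
          simp [Finsupp.smul_single]
        have e3 : (Finsupp.single c t : DForest →₀ K) = t • Finsupp.single c 1 := by
          simp [Finsupp.smul_single]
        rw [e1, e2, e3]
        simp only [map_smul, LinearMap.smul_apply]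
        rw [lift2_single, lift2_single, lift2_single, lift2_single, H a b c]

/-- on the augmentation ideal `M` of `BT`, with concatenation `m`,
left graft `≻` and right graft `≺`, one has for all `x, y, z ∈ M`:
`(xy)≻z = x≻(y≻z)`, `(x≻y)z = x≻(yz)`, `(x≺y)≺z = x≺(yz)`, `(xy)≺z = x(y≺z)`,
`(x≻y)≺z = x≻(y≺z)` (and `m` is associative); hence `(M, m, ≻, ≺)` is a bigraft
algebra. -/
theorem M_is_bigraft (K : Type*) [Field K] :
    ∀ x y z : DForest →₀ K,
      lift2 K catF (lift2 K catF x y) z = lift2 K catF x (lift2 K catF y z) ∧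
      lift2 K succF (lift2 K catF x y) z = lift2 K succF x (lift2 K succF y z) ∧
      lift2 K catF (lift2 K succF x y) z = lift2 K succF x (lift2 K catF y z) ∧
      lift2 K precF (lift2 K precF x y) z = lift2 K precF x (lift2 K catF y z) ∧
      lift2 K precF (lift2 K catF x y) z = lift2 K catF x (lift2 K precF y z) ∧
      lift2 K precF (lift2 K succF x y) z = lift2 K succF x (lift2 K precF y z) := by
  intro x y z
  exact ⟨lift2_ext K _ _ _ _ catF_assoc x y z,
    lift2_ext K _ _ _ _ succF_cat x y z,
    lift2_ext K _ _ _ _ cat_succF x y z,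
    lift2_ext K _ _ _ _ precF_precF x y z,
    lift2_ext K _ _ _ _ precF_cat x y z,
    lift2_ext K _ _ _ _ precF_succF x y z⟩
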